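/- The map L defined on the polytope Q by: f̃_i^{(α)} = 1 − Σ_{γ∈R⁻} f_i^{(γ)} if α = −c_i, and f̃_i^{(α)} = f_i^{(α+c_i)} otherwise; together with w̃_{j,r} = w_{j, r + x_j(c)}, maps Q bijectively to itself for any fixed codeword c ∈ C. -/

import Mathlib

/-- The single parity-check code `C_j` of row `j` of `H`, represented as full-length
vectors supported on `I_j = supp(H_j)` and satisfying the `j`-th parity check. -/
def localCode {m n : ℕ} {R : Type} [CommRing R] [Fintype R] [DecidableEq R]
    (H : Matrix (Fin m) (Fin n) R) (j : Fin m) : Finset (Fin n → R) :=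
  Finset.univ.filter (fun b => (∀ i, H j i = 0 → b i = 0) ∧ (∑ i, b i * H j i) = 0)
/-- Membership in the relaxed LP decoding polytope `Q`: `w ≥ 0` on each local code,
each `w_j` sums to one, and `f` is the induced marginal at every supported coordinate. -/
def memQ {m n : ℕ} {R : Type} [CommRing R] [Fintype R] [DecidableEq R]
    (H : Matrix (Fin m) (Fin n) R)
    (f : Fin n → {α : R // α ≠ 0} → ℝ) (w : Fin m → (Fin n → R) → ℝ) : Prop :=
  (∀ j, ∀ b ∈ localCode H j, 0 ≤ w j b) ∧
  (∀ j, ∑ b ∈ localCode H j, w j b = 1) ∧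
  (∀ j i (α : {α : R // α ≠ 0}), H j i ≠ 0 →
    f i α = ∑ b ∈ (localCode H j).filter (fun b => b i = α.val), w j b)
/-- The map `f ↦ f̃` of the codeword-symmetry argument:
`f̃_i^{(α)} = 1 − Σ_γ f_i^{(γ)}` if `α = −c_i`, and `f̃_i^{(α)} = f_i^{(α+c_i)}` otherwise. -/
def Lmap {n : ℕ} {R : Type} [CommRing R] [Fintype R] [DecidableEq R]
    (c : Fin n → R) (f : Fin n → {α : R // α ≠ 0} → ℝ) :
    Fin n → {α : R // α ≠ 0} → ℝ :=
  fun i α =>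
    if h : α.val = - c i then 1 - ∑ γ : {γ : R // γ ≠ 0}, f i γ
    else f i ⟨α.val + c i, fun h0 => h (eq_neg_of_add_eq_zero_left h0)⟩

/-- The map `w ↦ w̃` of the codeword-symmetry argument: `w̃_{j,r} = w_{j, r + x_j(c)}`. -/
def Lwmap {m n : ℕ} {R : Type} [CommRing R] [Fintype R] [DecidableEq R]
    (H : Matrix (Fin m) (Fin n) R) (c : Fin n → R)
    (w : Fin m → (Fin n → R) → ℝ) : Fin m → (Fin n → R) → ℝ :=
  fun j r => w j (fun i => r i + if H j i = 0 then 0 else c i)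

section helpers
variable {m n : ℕ} {R : Type} [CommRing R] [Fintype R] [DecidableEq R]

lemma mem_localCode_add (H : Matrix (Fin m) (Fin n) R) (j : Fin m)
    (c : Fin n → R) (hc : ∑ i, c i * H j i = 0)
    {b : Fin n → R} (hb : b ∈ localCode H j) :
    (fun i => b i + if H j i = 0 then 0 else c i) ∈ localCode H j := by
  simp only [localCode, Finset.mem_filter, Finset.mem_univ, true_and] at hb ⊢
  obtain ⟨h1, h2⟩ := hb
  refine ⟨fun i hi => by simp [hi, h1 i hi], ?_⟩
  have key : ∀ i, (b i + if H j i = 0 then 0 else c i) * H j i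
      = b i * H j i + c i * H j i := by
    intro i; by_cases hi : H j i = 0 <;> simp [hi] <;> ring
  simp only [key]
  rw [Finset.sum_add_distrib, h2, hc, add_zero]

lemma sum_translate' (H : Matrix (Fin m) (Fin n) R) (j : Fin m)
    (c : Fin n → R) (hc : ∑ i, c i * H j i = 0) (w : (Fin n → R) → ℝ)
    (p q : (Fin n → R) → Prop) [DecidablePred p] [DecidablePred q]
    (hpq : ∀ b ∈ localCode H j, (q b ↔ p (fun i => b i + if H j i = 0 then 0 else c i))) :
    ∑ b ∈ (localCode H j).filter q, w (fun i => b i + if H j i = 0 then 0 else c i)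
      = ∑ b ∈ (localCode H j).filter p, w b := by
  have hc' : ∑ i, (-c) i * H j i = 0 := by
    simp [neg_mul]
    simpa [neg_mul, Finset.sum_neg_distrib] using congrArg Neg.neg hc
  apply Finset.sum_nbij'
    (i := fun b => fun i => b i + if H j i = 0 then 0 else c i)
    (j := fun b => fun i => b i + if H j i = 0 then 0 else (-c) i)
  · intro a ha
    rw [Finset.mem_filter] at ha ⊢
    exact ⟨mem_localCode_add H j c hc ha.1, ((hpq a ha.1).mp ha.2)⟩
  · intro a ha
    rw [Finset.mem_filter] at ha ⊢
    have hmem := mem_localCode_add H j (-c) hc' ha.1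
    refine ⟨hmem, ?_⟩
    rw [hpq _ hmem]
    have : (fun i => (a i + if H j i = 0 then 0 else (-c) i) + if H j i = 0 then 0 else c i) = a := by
      funext i; by_cases hi : H j i = 0 <;> simp [hi]
    rw [this]; exact ha.2
  · intro a _
    funext i; by_cases hi : H j i = 0 <;> simp [hi]
  · intro a _
    funext i; by_cases hi : H j i = 0 <;> simp [hi]
  · intro a _; rfl

end helpers

section helpers2
variable {m n : ℕ} {R : Type} [CommRing R] [Fintype R] [DecidableEq R]

/-- extend a subtype-indexed family by zero -/
noncomputable def Fz (f : {α : R // α ≠ 0} → ℝ) : R → ℝ :=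
  fun x => if h : x = 0 then 0 else f ⟨x, h⟩

lemma sum_Fz (f : {α : R // α ≠ 0} → ℝ) :
    ∑ x : R, Fz f x = ∑ γ : {γ : R // γ ≠ 0}, f γ := by
  rw [← Finset.sum_erase (h := by simp [Fz]) (a := (0:R)) (s := Finset.univ)]
  rw [Finset.sum_subtype (p := fun x : R => x ≠ 0) (s := Finset.univ.erase 0)
    (h := by intro x; simp) (f := Fz f)]
  exact Finset.sum_congr rfl fun x _ => by simp [Fz, x.2]

lemma sum_Lmap (c : Fin n → R) (f : Fin n → {α : R // α ≠ 0} → ℝ) (i : Fin n)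
    (hci : c i ≠ 0) :
    ∑ γ : {γ : R // γ ≠ 0}, Lmap c f i γ = 1 - f i ⟨c i, hci⟩ := by
  set S := ∑ γ : {γ : R // γ ≠ 0}, f i γ with hS
  have key : ∀ x : R, Fz (Lmap c f i) x =
      (if x = -c i then 1 - S else 0) + Fz (f i) (x + c i)
        - (if x = 0 then f i ⟨c i, hci⟩ else 0) := by
    intro x
    by_cases hx : x = 0
    · have : ¬ ((0:R) = -c i) := fun h => hci (neg_eq_zero.mp h.symm)
      simp [Fz, hx, this, hci]
    · by_cases hx2 : x = -c i
      · have : x + c i = 0 := by rw [hx2]; ring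
        simp [Fz, hx, hx2, this, Lmap, hci, hS]
      · have hxc : x + c i ≠ 0 := fun h => hx2 (eq_neg_of_add_eq_zero_left h)
        simp only [Fz, dif_neg hx, dif_neg hxc, Lmap, dif_neg hx2, if_neg hx2, if_neg hx]
        ring_nf
  rw [← sum_Fz]
  simp only [key]
  rw [Finset.sum_sub_distrib, Finset.sum_add_distrib]
  rw [Finset.sum_ite_eq' Finset.univ (-c i), Finset.sum_ite_eq' Finset.univ (0:R)]
  have : ∑ x : R, Fz (f i) (x + c i) = ∑ x : R, Fz (f i) x :=
    Fintype.sum_equiv (Equiv.addRight (c i)) _ _ (fun x => rfl)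
  rw [this, sum_Fz]
  simp [hS]

lemma Lmap_neg_Lmap (c : Fin n → R) (f : Fin n → {α : R // α ≠ 0} → ℝ) :
    Lmap (-c) (Lmap c f) = f := by
  funext i α
  by_cases hci : c i = 0
  · have h1 : ¬ (α.val = -(-c) i) := by simp [hci, α.2]
    have h2 : ¬ ((α.val + (-c) i) = - c i) := by simp [hci, α.2]
    simp only [Lmap, dif_neg h1, dif_neg h2]
    congr 1
    ext
    simp [hci]
  · by_cases hα : α.val = c i
    · have h1 : α.val = -(-c) i := by simp [hα]
      rw [Lmap, dif_pos h1, sum_Lmap c f i hci]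
      have : α = ⟨c i, hci⟩ := Subtype.ext hα
      rw [this]; ring
    · have h1 : ¬ (α.val = -(-c) i) := by simpa using hα
      have h2 : ¬ (α.val + (-c) i = -c i) := by
        simp only [Pi.neg_apply]
        intro h
        exact α.2 (by linear_combination h)
      simp only [Lmap, dif_neg h1, dif_neg h2]
      congr 1
      ext
      simp

end helpers2

section helpers3
variable {m n : ℕ} {R : Type} [CommRing R] [Fintype R] [DecidableEq R]

lemma Lwmap_neg_Lwmap (H : Matrix (Fin m) (Fin n) R) (c : Fin n → R)
    (w : Fin m → (Fin n → R) → ℝ) : Lwmap H (-c) (Lwmap H c w) = w := by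
  funext j r
  show w j _ = w j r
  congr 1
  funext i
  by_cases hi : H j i = 0 <;> simp [hi]

lemma sum_fiber (H : Matrix (Fin m) (Fin n) R) (j : Fin m) (i : Fin n)
    (w : (Fin n → R) → ℝ) (hsum : ∑ b ∈ localCode H j, w b = 1) :
    ∑ b ∈ (localCode H j).filter (fun b => b i = 0), w b
      = 1 - ∑ γ : {γ : R // γ ≠ 0},
          ∑ b ∈ (localCode H j).filter (fun b => b i = γ.val), w b := by
  set G : R → ℝ := fun x => ∑ b ∈ (localCode H j).filter (fun b => b i = x), w b with hG
  have h1 : ∑ x : R, G x = 1 := by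
    rw [hG, Finset.sum_fiberwise (localCode H j) (fun b => b i) w]
    exact hsum
  have h2 : ∑ γ : {γ : R // γ ≠ 0}, G γ.val = (∑ x : R, G x) - G 0 := by
    rw [← sum_Fz (fun γ : {γ : R // γ ≠ 0} => G γ.val)]
    have : ∀ x : R, Fz (fun γ : {γ : R // γ ≠ 0} => G γ.val) x
        = G x - (if x = 0 then G 0 else 0) := by
      intro x; by_cases hx : x = 0 <;> simp [Fz, hx]
    simp only [this]
    rw [Finset.sum_sub_distrib, Finset.sum_ite_eq' Finset.univ (0:R)]
    simp
  show G 0 = 1 - _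
  rw [h2, h1]
  ring

lemma memQ_maps (H : Matrix (Fin m) (Fin n) R) (c : Fin n → R)
    (hc : ∀ j, ∑ i, c i * H j i = 0)
    {f : Fin n → {α : R // α ≠ 0} → ℝ} {w : Fin m → (Fin n → R) → ℝ}
    (h : memQ H f w) : memQ H (Lmap c f) (Lwmap H c w) := by
  obtain ⟨h1, h2, h3⟩ := h
  refine ⟨?_, ?_, ?_⟩
  · intro j b hb
    exact h1 j _ (mem_localCode_add H j c (hc j) hb)
  · intro j
    show ∑ b ∈ localCode H j, w j (fun i => b i + if H j i = 0 then 0 else c i) = 1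
    rw [show (localCode H j) = (localCode H j).filter (fun _ => True) from
      (Finset.filter_true _).symm]
    rw [sum_translate' H j c (hc j) (w j) (fun _ => True) (fun _ => True) (by simp)]
    rw [Finset.filter_true]
    exact h2 j
  · intro j i α hji
    by_cases hα : α.val = -c i
    · have hci : c i ≠ 0 := fun h0 => α.2 (by rw [hα, h0, neg_zero])
      have hq : ∀ b ∈ localCode H j,
          ((fun b : Fin n → R => b i = α.val) b ↔
           (fun b : Fin n → R => b i = 0) (fun i' => b i' + if H j i' = 0 then 0 else c i')) := by
        intro b _
        simp only [if_neg hji, hα]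
        constructor
        · intro hb; rw [hb]; ring
        · intro hb; linear_combination hb
      show Lmap c f i α = ∑ b ∈ (localCode H j).filter (fun b => b i = α.val),
        w j (fun i' => b i' + if H j i' = 0 then 0 else c i')
      rw [sum_translate' H j c (hc j) (w j) (fun b => b i = (0:R)) (fun b => b i = α.val) hq]
      rw [sum_fiber H j i (w j) (h2 j)]
      rw [Lmap, dif_pos hα]
      congr 1
      exact Finset.sum_congr rfl fun γ _ => h3 j i γ hji
    · have hq : ∀ b ∈ localCode H j,
          ((fun b : Fin n → R => b i = α.val) b ↔
           (fun b : Fin n → R => b i = α.val + c i) (fun i' => b i' + if H j i' = 0 then 0 else c i')) := by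
        intro b _
        simp only [if_neg hji]
        exact ⟨fun hb => by rw [hb], fun hb => by linear_combination hb⟩
      show Lmap c f i α = ∑ b ∈ (localCode H j).filter (fun b => b i = α.val),
        w j (fun i' => b i' + if H j i' = 0 then 0 else c i')
      rw [sum_translate' H j c (hc j) (w j) (fun b => b i = α.val + c i) (fun b => b i = α.val) hq]
      rw [Lmap, dif_neg hα]
      exact h3 j i _ hji

end helpers3

/-- for any fixed codeword `c ∈ C`, the map `L : (f,w) ↦ (f̃,w̃)` maps the
polytope `Q` bijectively onto itself. -/
theorem Lmap_bijOn_polytope {m n : ℕ} {R : Type}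
    [CommRing R] [Fintype R] [DecidableEq R]
    (H : Matrix (Fin m) (Fin n) R)
    (c : Fin n → R) (hc : ∀ j, ∑ i, c i * H j i = 0) :
    Set.BijOn
      (fun p : (Fin n → {α : R // α ≠ 0} → ℝ) × (Fin m → (Fin n → R) → ℝ) =>
        (Lmap c p.1, Lwmap H c p.2))
      {p | memQ H p.1 p.2} {p | memQ H p.1 p.2} := by
  have hcneg : ∀ j, ∑ i, (-c) i * H j i = 0 := by
    intro j
    have := congrArg Neg.neg (hc j)
    simpa [neg_mul, ← Finset.sum_neg_distrib] using this
  have hmapsF : Set.MapsTo (fun p : (Fin n → {α : R // α ≠ 0} → ℝ) × (Fin m → (Fin n → R) → ℝ) =>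
      (Lmap c p.1, Lwmap H c p.2)) {p | memQ H p.1 p.2} {p | memQ H p.1 p.2} :=
    fun p hp => memQ_maps H c hc hp
  have hmapsG : Set.MapsTo (fun p : (Fin n → {α : R // α ≠ 0} → ℝ) × (Fin m → (Fin n → R) → ℝ) =>
      (Lmap (-c) p.1, Lwmap H (-c) p.2)) {p | memQ H p.1 p.2} {p | memQ H p.1 p.2} :=
    fun p hp => memQ_maps H (-c) hcneg hp
  have hleft : ∀ p : (Fin n → {α : R // α ≠ 0} → ℝ) × (Fin m → (Fin n → R) → ℝ),
      (Lmap (-c) (Lmap c p.1), Lwmap H (-c) (Lwmap H c p.2)) = p := by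
    intro p
    rw [Lmap_neg_Lmap, Lwmap_neg_Lwmap]
  have hright : ∀ p : (Fin n → {α : R // α ≠ 0} → ℝ) × (Fin m → (Fin n → R) → ℝ),
      (Lmap c (Lmap (-c) p.1), Lwmap H c (Lwmap H (-c) p.2)) = p := by
    intro p
    have h1 := Lmap_neg_Lmap (-c) p.1
    have h2 := Lwmap_neg_Lwmap H (-c) p.2
    rw [neg_neg] at h1 h2
    rw [h1, h2]
  exact Set.InvOn.bijOn ⟨fun p _ => hleft p, fun p _ => hright p⟩ hmapsF hmapsG
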